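/- For an odd prime p, the set P₂ᵖ of two-part partitions of p has odd cardinality. -/

import Mathlib

def P2 (p : ℕ) : Set (ℕ × ℕ × ℕ × ℕ) :=
  {t | t.1 > t.2.2.1 ∧ t.2.2.1 > 0 ∧ t.2.1 > 0 ∧ t.2.2.2 > 0 ∧
    t.1 * t.2.1 + t.2.2.1 * t.2.2.2 = p}

/-- The finite model of `P2 p`. -/
def P2F (p : ℕ) : Finset (ℕ × ℕ × ℕ × ℕ) :=
  ((Finset.range (p + 1)) ×ˢ (Finset.range (p + 1)) ×ˢ (Finset.range (p + 1)) ×ˢ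
      (Finset.range (p + 1))).filter
    (fun t => t.1 > t.2.2.1 ∧ t.2.2.1 > 0 ∧ t.2.1 > 0 ∧ t.2.2.2 > 0 ∧
      t.1 * t.2.1 + t.2.2.1 * t.2.2.2 = p)

lemma P2_eq_coe (p : ℕ) : P2 p = ↑(P2F p) := by
  ext ⟨a1, f1, a2, f2⟩
  simp only [P2, P2F, Set.mem_setOf_eq, Finset.coe_filter, Finset.mem_product,
    Finset.mem_range]
  constructor
  · rintro ⟨h1, h2, h3, h4, h5⟩
    refine ⟨⟨?_, ?_, ?_, ?_⟩, h1, h2, h3, h4, h5⟩ <;> simp only [Nat.lt_succ_iff] <;> nlinarith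
  · rintro ⟨-, h⟩; exact h

/-- The conjugation involution on two-part partitions. -/
def conj (t : ℕ × ℕ × ℕ × ℕ) : ℕ × ℕ × ℕ × ℕ :=
  (t.2.1 + t.2.2.2, t.2.2.1, t.2.1, t.1 - t.2.2.1)

lemma conj_mem {p : ℕ} {t : ℕ × ℕ × ℕ × ℕ} (ht : t ∈ P2F p) : conj t ∈ P2F p := by
  obtain ⟨a1, f1, a2, f2⟩ := t
  simp only [P2F, Finset.mem_filter, Finset.mem_product, Finset.mem_range,
    Nat.lt_succ_iff] at ht ⊢
  obtain ⟨⟨b1, b2, b3, b4⟩, h1, h2, h3, h4, h5⟩ := ht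
  obtain ⟨c, hc⟩ : ∃ c, a1 = a2 + c := ⟨a1 - a2, by omega⟩
  subst hc
  simp only [conj, Nat.add_sub_cancel_left]
  refine ⟨⟨?_, ?_, ?_, ?_⟩, ?_, ?_, ?_, ?_, ?_⟩ <;>
    first
    | omega
    | nlinarith
    | (rw [← h5]; ring)

lemma conj_conj {p : ℕ} {t : ℕ × ℕ × ℕ × ℕ} (ht : t ∈ P2F p) : conj (conj t) = t := by
  obtain ⟨a1, f1, a2, f2⟩ := t
  simp only [P2F, Finset.mem_filter] at ht
  obtain ⟨-, h1, h2, h3, h4, h5⟩ := ht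
  simp only [conj, Prod.mk.injEq]
  refine ⟨by omega, by trivial, by trivial, by omega⟩

lemma conj_fixed {p : ℕ} (hp : p.Prime) (hodd : Odd p) {t : ℕ × ℕ × ℕ × ℕ}
    (ht : t ∈ P2F p) (hf : conj t = t) : t = ((p + 1) / 2, 1, 1, (p - 1) / 2) := by
  obtain ⟨a1, f1, a2, f2⟩ := t
  simp only [P2F, Finset.mem_filter] at ht
  obtain ⟨-, h1, h2, h3, h4, h5⟩ := ht
  simp only [conj, Prod.mk.injEq] at hf
  obtain ⟨e1, e2, e3, e4⟩ := hf
  -- from e2, e3 : f1 = a2; from e1 : a1 = f1 + f2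
  subst e2
  -- h5 : a1 * a2 + a2 * f2 = p, a1 = a2 + f2
  have hdvd : a2 ∣ p := ⟨a1 + f2, by rw [← h5]; ring⟩
  have ha2 : a2 = 1 := by
    rcases (Nat.Prime.eq_one_or_self_of_dvd hp a2 hdvd) with h | h
    · exact h
    · exfalso
      subst h
      nlinarith [h5, h1, h2, h4]
  subst ha2
  have hp3 : 3 ≤ p := by
    have h2 := hp.two_le
    have := Nat.odd_iff.mp hodd
    omega
  have ha1 : a1 = (p + 1) / 2 := by omega
  have hf2 : f2 = (p - 1) / 2 := by omega
  simp [ha1, hf2]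

lemma fixed_mem {p : ℕ} (hp : p.Prime) (hodd : Odd p) :
    ((p + 1) / 2, 1, 1, (p - 1) / 2) ∈ P2F p := by
  have hp3 : 3 ≤ p := by
    have h2 := hp.two_le
    have := Nat.odd_iff.mp hodd
    omega
  have hodd' : p % 2 = 1 := Nat.odd_iff.mp hodd
  simp only [P2F, Finset.mem_filter, Finset.mem_product, Finset.mem_range, Nat.lt_succ_iff]
  refine ⟨⟨by omega, by omega, by omega, by omega⟩, by omega, by omega, by omega, by omega, by omega⟩

theorem P2_odd_card (p : ℕ) (hp : p.Prime) (hodd : Odd p) :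
    Odd (P2 p).ncard := by
  rw [P2_eq_coe, Set.ncard_coe_finset]
  set x0 : ℕ × ℕ × ℕ × ℕ := ((p + 1) / 2, 1, 1, (p - 1) / 2) with hx0
  have hx0mem : x0 ∈ P2F p := fixed_mem hp hodd
  have key : ((P2F p).card : ZMod 2) = 1 := by
    have hsum : ∀ s : Finset (ℕ × ℕ × ℕ × ℕ), (s.card : ZMod 2) = ∑ _x ∈ s, (1 : ZMod 2) := by
      intro s; simp
    rw [hsum, ← Finset.sum_erase_add _ _ hx0mem]
    have herase : ∑ _x ∈ (P2F p).erase x0, (1 : ZMod 2) = 0 := by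
      apply Finset.sum_involution (fun a _ => conj a)
      · intro a _; decide
      · intro a ha _
        intro h
        exact (Finset.ne_of_mem_erase ha)
          (conj_fixed hp hodd (Finset.mem_of_mem_erase ha) h)
      · intro a ha
        refine Finset.mem_erase.mpr ⟨?_, conj_mem (Finset.mem_of_mem_erase ha)⟩
        intro h
        apply Finset.ne_of_mem_erase ha
        have hfix : conj x0 = x0 := by
          have hodd' : p % 2 = 1 := Nat.odd_iff.mp hodd
          have hp3 : 2 ≤ p := hp.two_le
          simp only [hx0, conj, Prod.mk.injEq]
          refine ⟨by omega, by trivial, by trivial, by omega⟩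
        have := conj_conj (Finset.mem_of_mem_erase ha)
        rw [h, hfix] at this
        exact this.symm
      · intro a ha
        exact conj_conj (Finset.mem_of_mem_erase ha)
    rw [herase, zero_add]
  rw [Nat.odd_iff]
  have := ZMod.val_natCast (n := 2) (P2F p).card
  rw [key] at this
  simpa [ZMod.val_one] using this.symm
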